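/- arXiv:1809.09822 — 2 statements merged into one kernel-verified Lean document; each statement's English description precedes it below -/
import Mathlib

section
/- For any real y, σ > 0, and real N > 1: ∑_{l=0}^{3} (∑_{j=0}^∞ H_{4j+l}(iy)·N^{-(4j+l)σ})·(∑_{k=0}^∞ H_{4k+l}(iy)·N^{-(4k+l)σ}) = (1/4)·∑_{j=0}^{3} exp(-2iy·log|1 - i^j/N^σ|), where all series converge absolutely. -/
open Complex

noncomputable def H (r : ℕ) (u : ℂ) : ℂ :=
  (∏ j ∈ Finset.range r, (u + j)) / (r.factorial : ℂ)

-- derivative lemma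
lemma hasDerivAt_aux (c : ℂ) {w : ℂ} (hw : 1 - w ∈ Complex.slitPlane) :
    HasDerivAt (fun w => Complex.exp (c * Complex.log (1 - w)))
      (-c * Complex.exp ((c - 1) * Complex.log (1 - w))) w := by
  have h1 : HasDerivAt (fun w : ℂ => 1 - w) (-1) w := by
    simpa using ((hasDerivAt_id w).const_sub 1)
  have h2 : HasDerivAt (fun w : ℂ => Complex.log (1 - w)) ((1 - w)⁻¹ * -1) w :=
    (Complex.hasDerivAt_log hw).comp w h1
  have h3 := ((h2.const_mul c).cexp)
  refine h3.congr_deriv ?_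
  have hne : (1 - w) ≠ 0 := Complex.slitPlane_ne_zero hw
  rw [sub_mul, one_mul, Complex.exp_sub, Complex.exp_log hne]
  rw [div_eq_mul_inv]
  ring

lemma mem_slit_of_ball {w : ℂ} (hw : ‖w‖ < 1) : 1 - w ∈ Complex.slitPlane := by
  refine Complex.mem_slitPlane_iff.2 (Or.inl ?_)
  have : w.re ≤ ‖w‖ := Complex.re_le_norm w
  simp only [Complex.sub_re, Complex.one_re]
  linarith

lemma iteratedDeriv_aux (u : ℂ) (n : ℕ) :
    ∀ w ∈ {w : ℂ | 1 - w ∈ Complex.slitPlane},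
      iteratedDeriv n (fun w => Complex.exp (-u * Complex.log (1 - w))) w =
        (∏ j ∈ Finset.range n, (u + j)) * Complex.exp (-(u + n) * Complex.log (1 - w)) := by
  have hU : IsOpen {w : ℂ | 1 - w ∈ Complex.slitPlane} :=
    Complex.isOpen_slitPlane.preimage (by fun_prop)
  induction n with
  | zero => intro w hw; simp [iteratedDeriv_zero]
  | succ n ih =>
    intro w hw
    rw [iteratedDeriv_succ]
    have hev : iteratedDeriv n (fun w => Complex.exp (-u * Complex.log (1 - w))) =ᶠ[nhds w]
        fun w => (∏ j ∈ Finset.range n, (u + j)) * Complex.exp (-(u + n) * Complex.log (1 - w)) :=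
      Filter.eventuallyEq_of_mem (hU.mem_nhds hw) ih
    rw [hev.deriv_eq]
    have hd := ((hasDerivAt_aux (-(u + n)) hw).const_mul (∏ j ∈ Finset.range n, (u + j)))
    rw [hd.deriv, Finset.prod_range_succ]
    have : (-(u + (n:ℂ)) - 1) = -(u + ((n:ℕ)+1 : ℕ)) := by push_cast; ring
    rw [this]
    push_cast
    ring

lemma hasSum_H (u : ℂ) {z : ℂ} (hz : ‖z‖ < 1) :
    HasSum (fun r => H r u * z ^ r) (Complex.exp (-u * Complex.log (1 - z))) := by
  set f : ℂ → ℂ := fun w => Complex.exp (-u * Complex.log (1 - w)) with hf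
  set R : NNReal := ⟨(1 + ‖z‖) / 2, by positivity⟩ with hR
  have hR1 : (R : ℝ) < 1 := by
    simp only [hR, NNReal.coe_mk]; show (1 + ‖z‖) / 2 < 1; linarith
  have hzR : ‖z‖ < R := by
    simp only [hR, NNReal.coe_mk]; show ‖z‖ < (1 + ‖z‖) / 2; linarith
  have hdiff : DifferentiableOn ℂ f (Metric.closedBall 0 R) := by
    intro w hw
    have hw' : ‖w‖ < 1 := by
      rw [Metric.mem_closedBall, dist_zero_right] at hw
      exact lt_of_le_of_lt hw hR1
    have hs := mem_slit_of_ball hw'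
    refine DifferentiableAt.differentiableWithinAt ?_
    exact (hasDerivAt_aux (-u) hs).differentiableAt
  have hpos : 0 < R := by
    have : (0:ℝ) < R := by simp only [hR, NNReal.coe_mk]; show (0:ℝ) < (1 + ‖z‖) / 2; positivity
    exact_mod_cast this
  obtain h := hdiff.hasFPowerSeriesOnBall hpos
  have hmem : z ∈ Metric.eball (0 : ℂ) R := by
    rw [Metric.emetric_ball_nnreal, Metric.mem_ball, dist_zero_right]
    exact hzR
  have hs := h.hasSum hmem
  rw [zero_add] at hs
  have hcoeff : ∀ n : ℕ, (cauchyPowerSeries f 0 R).coeff n = H n u := by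
    intro n
    have h1 := h.factorial_smul (1 : ℂ) n
    have h2 : iteratedDeriv n f 0 = ∏ j ∈ Finset.range n, (u + j) := by
      have h0 : (0:ℂ) ∈ {w : ℂ | 1 - w ∈ Complex.slitPlane} := by
        simp only [Set.mem_setOf_eq, sub_zero]
        exact Complex.one_mem_slitPlane
      rw [iteratedDeriv_aux u n 0 h0]
      simp [Complex.log_one]
    rw [iteratedDeriv_eq_iteratedFDeriv] at h2
    have h3 : (n.factorial : ℂ) * (cauchyPowerSeries f 0 R).coeff n
        = ∏ j ∈ Finset.range n, (u + j) := by
      rw [← h2, ← h1, nsmul_eq_mul]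
      norm_cast
    rw [H, eq_div_iff (by exact_mod_cast n.factorial_ne_zero), ← h3]
    ring
  have e : (fun n => H n u * z ^ n) = fun n => (cauchyPowerSeries f 0 R n) fun _ => z :=
    funext fun n => by
      rw [FormalMultilinearSeries.apply_eq_pow_smul_coeff, hcoeff, smul_eq_mul]
      ring
  rw [e]; exact hs

lemma I_pow_mod (k : ℕ) : Complex.I ^ k = Complex.I ^ (k % 4) := by
  conv_lhs => rw [← Nat.div_add_mod k 4]
  rw [pow_add, pow_mul, Complex.I_pow_four, one_pow, one_mul]

lemma sum_I_pow (m : ℕ) :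
    ∑ n ∈ Finset.range 4, (Complex.I ^ m) ^ n = if m % 4 = 0 then 4 else 0 := by
  have h := I_pow_mod m
  have h4 : m % 4 < 4 := Nat.mod_lt _ (by norm_num)
  rw [h]
  interval_cases h' : m % 4 <;>
    simp [Finset.sum_range_succ, pow_succ, Complex.I_sq]

lemma hasSum_residue (a : ℕ → ℂ) (S : ℕ → ℂ) (l : ℕ) (hl : l < 4)
    (hn : ∀ n, HasSum (fun r => a r * (Complex.I ^ n) ^ r) (S n)) :
    HasSum (fun j => a (4 * j + l))
      (4⁻¹ * ∑ n ∈ Finset.range 4, (Complex.I ^ n) ^ (3 * l) * S n) := by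
  have h2 : HasSum (fun r => ∑ n ∈ Finset.range 4, (Complex.I ^ n) ^ (3 * l) * (a r * (Complex.I ^ n) ^ r))
      (∑ n ∈ Finset.range 4, (Complex.I ^ n) ^ (3 * l) * S n) :=
    hasSum_sum fun n _ => (hn n).mul_left _
  have hterm : ∀ r, ∑ n ∈ Finset.range 4, (Complex.I ^ n) ^ (3 * l) * (a r * (Complex.I ^ n) ^ r)
      = if (3 * l + r) % 4 = 0 then 4 * a r else 0 := by
    intro r
    have : ∀ n, (Complex.I ^ n) ^ (3 * l) * (a r * (Complex.I ^ n) ^ r)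
        = a r * (Complex.I ^ (3 * l + r)) ^ n := by
      intro n
      rw [← pow_mul, ← pow_mul, ← pow_mul,
        show (3 * l + r) * n = n * (3 * l) + n * r by ring, pow_add]
      ring
    simp_rw [this, ← Finset.mul_sum, sum_I_pow]
    split <;> ring
  rw [funext hterm] at h2
  set g : ℕ → ℂ := fun r => if (3 * l + r) % 4 = 0 then 4 * a r else 0 with hg
  have hinj : Function.Injective (fun j : ℕ => 4 * j + l) := by
    intro a b h
    have : 4 * a + l = 4 * b + l := h
    omega
  have hzero : ∀ x ∉ Set.range (fun j : ℕ => 4 * j + l), g x = 0 := by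
    intro x hx
    have : ¬ ∃ j, 4 * j + l = x := by simpa [Set.range] using hx
    have hne : (3 * l + x) % 4 ≠ 0 := by
      intro hc
      exact this ⟨x / 4, by omega⟩
    simp [hg, hne]
  have h3 : HasSum (fun j => g (4 * j + l)) (∑ n ∈ Finset.range 4, (Complex.I ^ n) ^ (3 * l) * S n) :=
    (hinj.hasSum_iff hzero).2 h2
  have heq : ∀ j, g (4 * j + l) = 4 * a (4 * j + l) := by
    intro j
    have : (3 * l + (4 * j + l)) % 4 = 0 := by omega
    simp [hg, this]
  rw [funext heq] at h3
  have := h3.mul_left 4⁻¹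
  have e : (fun j => a (4 * j + l)) = fun i => 4⁻¹ * (4 * a (4 * i + l)) :=
    funext fun j => by
      rw [← mul_assoc]
      norm_num
  rw [e]; exact this

theorem stmt7 (y σ N : ℝ) (hσ : 0 < σ) (hN : 1 < N) :
    (∀ l ∈ Finset.range 4, Summable (fun j : ℕ =>
        ‖H (4 * j + l) (Complex.I * y) *
          ((N ^ (-((4 * j + l : ℕ) : ℝ) * σ) : ℝ) : ℂ)‖)) ∧
    ∑ l ∈ Finset.range 4,
        (∑' j : ℕ, H (4 * j + l) (Complex.I * y) *
            ((N ^ (-((4 * j + l : ℕ) : ℝ) * σ) : ℝ) : ℂ)) *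
          (∑' k : ℕ, H (4 * k + l) (Complex.I * y) *
            ((N ^ (-((4 * k + l : ℕ) : ℝ) * σ) : ℝ) : ℂ)) =
      (1 / 4) * ∑ j ∈ Finset.range 4,
        Complex.exp (-2 * Complex.I * y *
          Real.log ‖1 - Complex.I ^ j / ((N ^ σ : ℝ) : ℂ)‖) := by
  have hN0 : (0:ℝ) < N := lt_trans zero_lt_one hN
  set u : ℂ := Complex.I * y with hu
  set t : ℝ := N ^ (-σ) with htdef
  have ht0 : 0 < t := Real.rpow_pos_of_pos hN0 _
  have ht1 : t < 1 := Real.rpow_lt_one_of_one_lt_of_neg hN (by linarith)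
  have hcast : ∀ r : ℕ, ((N ^ (-(r:ℝ) * σ) : ℝ) : ℂ) = ((t:ℝ) : ℂ) ^ r := by
    intro r
    rw [show (-(r:ℝ) * σ) = (-σ) * (r:ℝ) by ring, Real.rpow_mul (le_of_lt hN0),
      Real.rpow_natCast, Complex.ofReal_pow]
  set a : ℕ → ℂ := fun r => H r u * ((t:ℝ):ℂ) ^ r with ha
  set F : ℕ → ℂ := fun n => Complex.exp (-u * Complex.log (1 - Complex.I ^ n * t)) with hFdef
  have hF : ∀ n : ℕ, HasSum (fun r => a r * (Complex.I ^ n) ^ r) (F n) := by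
    intro n
    have hz : ‖(Complex.I ^ n * (t:ℂ))‖ < 1 := by
      rw [norm_mul, norm_pow, Complex.norm_I, one_pow, one_mul, Complex.norm_real,
        Real.norm_eq_abs, abs_of_pos ht0]
      exact ht1
    have := hasSum_H u hz
    convert this using 2 with r
    rw [ha, mul_pow]
    ring
  have hsum1 : ∀ l ∈ Finset.range 4, Summable (fun j : ℕ =>
      ‖H (4 * j + l) u * ((N ^ (-((4 * j + l : ℕ) : ℝ) * σ) : ℝ) : ℂ)‖) := by
    intro l _
    have hs : Summable (fun r => ‖a r‖) := by
      refine summable_norm_iff.2 ?_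
      have := (hF 0).summable
      simpa using this
    have hinj : Function.Injective (fun j : ℕ => 4 * j + l) := by
      intro a b h
      have : 4 * a + l = 4 * b + l := h
      omega
    have := hs.comp_injective hinj
    refine this.congr fun j => ?_
    simp only [Function.comp_apply, ha, hcast]
  refine ⟨hsum1, ?_⟩
  have htsum : ∀ l, l < 4 → (∑' j : ℕ, H (4 * j + l) u *
      ((N ^ (-((4 * j + l : ℕ) : ℝ) * σ) : ℝ) : ℂ)) =
      4⁻¹ * ∑ n ∈ Finset.range 4, (Complex.I ^ n) ^ (3 * l) * F n := by
    intro l hl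
    rw [← (hasSum_residue a F l hl hF).tsum_eq]
    exact tsum_congr fun j => by rw [hcast]
  have hdivt : ∀ j : ℕ, (1 : ℂ) - Complex.I ^ j / ((N ^ σ : ℝ) : ℂ) = 1 - Complex.I ^ j * t := by
    intro j
    have : ((t:ℝ):ℂ) = (((N ^ σ : ℝ)):ℂ)⁻¹ := by
      rw [htdef, Real.rpow_neg (le_of_lt hN0)]
      push_cast
      rfl
    rw [this, div_eq_mul_inv]
  set E : ℕ → ℂ := fun j => Complex.exp (-2 * Complex.I * y *
      (Real.log ‖1 - Complex.I ^ j * t‖ : ℂ)) with hEdef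
  have hrhs : ∀ j : ℕ, Complex.exp (-2 * Complex.I * y *
      (Real.log ‖1 - Complex.I ^ j / ((N ^ σ : ℝ) : ℂ)‖ : ℂ)) = E j := by
    intro j
    rw [hEdef, hdivt]
  -- real-argument cases
  have hreal : ∀ s : ℝ, 0 < s →
      Complex.exp (-u * Complex.log ((s:ℝ):ℂ)) * Complex.exp (-u * Complex.log ((s:ℝ):ℂ)) =
      Complex.exp (-2 * Complex.I * y * (Real.log s : ℂ)) := by
    intro s hs
    rw [← Complex.exp_add, ← Complex.ofReal_log (le_of_lt hs)]
    congr 1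
    rw [hu]
    ring
  have habs : ∀ s : ℝ, 0 < s → ‖((s:ℝ):ℂ)‖ = s := by
    intro s hs
    rw [Complex.norm_real, Real.norm_eq_abs, abs_of_pos hs]
  have hE0 : F 0 * F 0 = E 0 := by
    have h1 : (1:ℂ) - Complex.I ^ 0 * t = (((1 - t : ℝ)):ℂ) := by push_cast; ring
    rw [hFdef, hEdef]
    simp only [h1]
    rw [habs _ (by linarith)]
    exact hreal _ (by linarith)
  have hE2 : F 2 * F 2 = E 2 := by
    have h1 : (1:ℂ) - Complex.I ^ 2 * t = (((1 + t : ℝ)):ℂ) := by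
      rw [Complex.I_sq]; push_cast; ring
    rw [hFdef, hEdef]
    simp only [h1]
    rw [habs _ (by linarith)]
    exact hreal _ (by linarith)
  have hz13 : (1:ℂ) - Complex.I ^ 3 * t = (starRingEnd ℂ) (1 - Complex.I ^ 1 * t) := by
    rw [map_sub, map_one, map_mul, map_pow, Complex.conj_I, Complex.conj_ofReal,
      pow_succ, Complex.I_sq]
    ring
  have hre : ((1:ℂ) - Complex.I ^ 1 * t).re = 1 := by simp
  have hargne : ((1:ℂ) - Complex.I ^ 1 * t).arg ≠ Real.pi := by
    intro hc
    rw [Complex.arg_eq_pi_iff] at hc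
    rw [hre] at hc
    linarith [hc.1]
  have hE13 : F 1 * F 3 = E 1 := by
    rw [hFdef, hEdef]
    simp only [hz13]
    rw [← Complex.exp_add, Complex.log_conj _ hargne, ← mul_add, Complex.add_conj,
      Complex.log_re]
    congr 1
    rw [hu]
    push_cast
    ring
  have hE3 : E 3 = E 1 := by
    rw [hEdef]
    simp only [hz13, Complex.norm_conj]
  -- rewrite goal
  have h1 : ∀ l ∈ Finset.range 4,
        (∑' j : ℕ, H (4 * j + l) u * ((N ^ (-((4 * j + l : ℕ) : ℝ) * σ) : ℝ) : ℂ)) *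
          (∑' k : ℕ, H (4 * k + l) u * ((N ^ (-((4 * k + l : ℕ) : ℝ) * σ) : ℝ) : ℂ))
      = (4⁻¹ * ∑ n ∈ Finset.range 4, (Complex.I ^ n) ^ (3 * l) * F n) *
          (4⁻¹ * ∑ n ∈ Finset.range 4, (Complex.I ^ n) ^ (3 * l) * F n) := by
    intro l hl
    rw [Finset.mem_range] at hl
    rw [htsum l hl]
  rw [Finset.sum_congr rfl h1]
  have h2 : ∑ l ∈ Finset.range 4,
      (4⁻¹ * ∑ n ∈ Finset.range 4, (Complex.I ^ n) ^ (3 * l) * F n) *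
        (4⁻¹ * ∑ n ∈ Finset.range 4, (Complex.I ^ n) ^ (3 * l) * F n)
      = (1 / 4) * ∑ j ∈ Finset.range 4, E j := by
    simp only [Finset.sum_range_succ, Finset.sum_range_zero, ← pow_mul]
    norm_num
    rw [← hE0, ← hE2, ← hE13, hE3, ← hE13]
    have hI2 : (Complex.I:ℂ)^2 = -1 := Complex.I_sq
    have hI3 : (Complex.I:ℂ)^3 = -Complex.I := by rw [pow_succ, hI2]; ring
    have hI4 : (Complex.I:ℂ)^4 = 1 := Complex.I_pow_four
    have hI6 : (Complex.I:ℂ)^6 = -1 := by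
      rw [show (6:ℕ) = 4 + 2 from rfl, pow_add, hI4, one_mul, hI2]
    have hI9 : (Complex.I:ℂ)^9 = Complex.I := by
      rw [show (9:ℕ) = 4 + 4 + 1 from rfl, pow_add, pow_add, hI4, pow_one]; ring
    have hI12 : (Complex.I:ℂ)^12 = 1 := by
      rw [show (12:ℕ) = 4 * 3 from rfl, pow_mul, hI4, one_pow]
    have hI18 : (Complex.I:ℂ)^18 = -1 := by
      rw [show (18:ℕ) = 4 * 4 + 2 from rfl, pow_add, pow_mul, hI4, one_pow, one_mul, hI2]
    have hI27 : (Complex.I:ℂ)^27 = -Complex.I := by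
      rw [show (27:ℕ) = 4 * 6 + 3 from rfl, pow_add, pow_mul, hI4, one_pow, one_mul, hI3]
    rw [hI6, hI9, hI12, hI18, hI27]
    ring_nf
    simp only [Complex.I_sq]
    ring
  rw [h2]
  refine congrArg _ (Finset.sum_congr rfl fun j _ => (hrhs j).symm)
end

section
/- Let σ > 1/2 be real and y ∈ ℝ. The infinite product ∏_{𝔭 ∤ (2)} M_{σ,𝔭}(y), taken over prime ideals 𝔭 of ℤ[i] not dividing (2), with M_{σ,𝔭}(y) = 1/(N(𝔭)+1) + (1/4)·(N(𝔭)/(N(𝔭)+1))·∑_{j=0}^{3} exp(-2iy·log|1 - i^j/N(𝔭)^σ|), converges absolutely. -/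
open Complex

/-- The norm of an ideal of `ℤ[i]`: the cardinality of the quotient ring. -/
noncomputable def idealNorm (p : Ideal GaussianInt) : ℕ := Nat.card (GaussianInt ⧸ p)

/-- The local factor `M_{σ,𝔭}(y)`. -/
noncomputable def localFactor (σ y : ℝ) (p : Ideal GaussianInt) : ℂ :=
  (1 / ((idealNorm p : ℝ) + 1) : ℝ) +
    (1 / 4) * (((idealNorm p : ℝ) / ((idealNorm p : ℝ) + 1)) : ℝ) *
      ∑ j ∈ Finset.range 4,
        Complex.exp (-2 * Complex.I * y *
          Real.log ‖1 - Complex.I ^ j / (((idealNorm p : ℝ) ^ σ : ℝ) : ℂ)‖)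

namespace Stmt15Aux

def gaussAddEquiv : GaussianInt ≃+ (Fin 2 → ℤ) where
  toFun α := ![α.re, α.im]
  invFun v := ⟨v 0, v 1⟩
  left_inv a := rfl
  right_inv v := by funext i; fin_cases i <;> rfl
  map_add' a b := by funext i; fin_cases i <;> rfl

noncomputable def gaussBasis : Module.Basis (Fin 2) ℤ GaussianInt :=
  Module.Basis.ofEquivFun gaussAddEquiv.toIntLinearEquiv

instance : Module.Free ℤ GaussianInt := Module.Free.of_basis gaussBasis
instance : Module.Finite ℤ GaussianInt := Module.Finite.of_basis gaussBasis

lemma gaussBasis_apply (i : Fin 2) : gaussBasis i = gaussAddEquiv.symm (Pi.single i 1) := by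
  apply gaussAddEquiv.injective
  rw [show gaussAddEquiv (gaussBasis i) = gaussAddEquiv.toIntLinearEquiv (gaussBasis i) from rfl]
  simp [gaussBasis, Module.Basis.ofEquivFun]
  all_goals infer_instance

lemma gaussBasis_repr (x : GaussianInt) (i : Fin 2) :
    gaussBasis.repr x i = gaussAddEquiv x i := by
  simp [gaussBasis, Module.Basis.ofEquivFun_repr_apply]

lemma algebraNorm_eq (α : GaussianInt) : Algebra.norm ℤ α = Zsqrtd.norm α := by
  rw [Algebra.norm_eq_matrix_det gaussBasis, Matrix.det_fin_two]
  simp only [Algebra.leftMulMatrix_eq_repr_mul, gaussBasis_repr, gaussBasis_apply]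
  have h0 : gaussAddEquiv.symm (Pi.single (0 : Fin 2) 1) = 1 := rfl
  have h1 : gaussAddEquiv.symm (Pi.single (1 : Fin 2) 1) = ⟨0, 1⟩ := rfl
  rw [h0, h1, mul_one]
  have : α * (⟨0, 1⟩ : GaussianInt) = ⟨-α.im, α.re⟩ := by
    ext <;> simp [Zsqrtd.re_mul, Zsqrtd.im_mul]
  rw [this]
  show α.re * α.re - -α.im * α.im = _
  rw [Zsqrtd.norm_def]; ring


lemma idealNorm_eq_absNorm (p : Ideal GaussianInt) : idealNorm p = Ideal.absNorm p := by
  rw [Ideal.absNorm_apply, Submodule.cardQuot_apply]; rfl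

lemma idealNorm_span (α : GaussianInt) :
    idealNorm (Ideal.span {α}) = (Zsqrtd.norm α).natAbs := by
  rw [idealNorm_eq_absNorm, Ideal.absNorm_span_singleton, algebraNorm_eq]

lemma two_le_idealNorm {p : Ideal GaussianInt} (hp : p.IsPrime) (hb : p ≠ ⊥) :
    2 ≤ idealNorm p := by
  obtain ⟨g, hg⟩ := Submodule.IsPrincipal.principal p
  have hg0 : g ≠ 0 := by
    rintro rfl
    exact hb (by rw [hg]; simp)
  have hfin : Finite (GaussianInt ⧸ p) := by
    rw [← Ideal.absNorm_ne_zero_iff, ← idealNorm_eq_absNorm, hg,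
      show Submodule.span GaussianInt {g} = Ideal.span {g} from rfl, idealNorm_span]
    simpa [Int.natAbs_eq_zero] using (GaussianInt.norm_eq_zero.not.mpr hg0)
  have : Nontrivial (GaussianInt ⧸ p) := Ideal.Quotient.nontrivial_iff.mpr hp.ne_top
  exact Finite.one_lt_card_iff_nontrivial.mpr this

lemma abs_exp_mul_I_sub_one_le (θ : ℝ) :
    ‖Complex.exp (θ * I) - 1‖ ≤ |θ| := by
  rw [Complex.norm_def, ← Real.sqrt_sq_eq_abs]
  apply Real.sqrt_le_sqrt
  rw [Complex.exp_mul_I]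
  have h1 := Real.sin_sq_add_cos_sq θ
  have h2 := Real.one_sub_sq_div_two_le_cos (x := θ)
  have hre : (Complex.cos θ + Complex.sin θ * I - 1).re = Real.cos θ - 1 := by
    simp [Complex.cos_ofReal_re, Complex.sin_ofReal_im]
  have him : (Complex.cos θ + Complex.sin θ * I - 1).im = Real.sin θ := by
    simp [Complex.sin_ofReal_re]
  rw [Complex.normSq_apply, hre, him]
  nlinarith

lemma abs_exp_term (y L : ℝ) :
    ‖Complex.exp (-2 * I * y * L) - 1‖ ≤ 2 * |y| * |L| := by
  have h : (-2 * I * (y:ℂ) * (L:ℂ)) = ((-2*y*L : ℝ) : ℂ) * I := by push_cast; ring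
  rw [h]
  refine (abs_exp_mul_I_sub_one_le _).trans ?_
  rw [abs_mul, abs_mul]
  simp [abs_mul]


abbrev PrimeT := {p : Ideal GaussianInt // p.IsPrime ∧ p ≠ ⊥ ∧ (2 : GaussianInt) ∉ p}

lemma summable_idealNorm_rpow (σ : ℝ) (hσ : 1/2 < σ) :
    Summable (fun p : PrimeT => ((idealNorm p.1 : ℝ)) ^ (-(2*σ))) := by
  have h4 : (2:ℝ) < 2*(2*σ) := by linarith
  have hs : Summable fun x : Fin 2 → ℤ => ‖x‖ ^ (-(2*(2*σ))) :=
    EisensteinSeries.summable_one_div_norm_rpow h4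
  have hprin : ∀ p : PrimeT, (p.1 : Submodule GaussianInt GaussianInt).IsPrincipal :=
    fun p => IsPrincipalIdealRing.principal p.1
  let gen : PrimeT → GaussianInt := fun p =>
    @Submodule.IsPrincipal.generator _ _ _ _ _ p.1 (hprin p)
  have hspan : ∀ p : PrimeT, Ideal.span {gen p} = p.1 := fun p =>
    @Ideal.span_singleton_generator _ _ p.1 (hprin p)
  have hgen0 : ∀ p : PrimeT, gen p ≠ 0 := by
    intro p hg
    exact p.2.2.1 (by rw [← hspan p, hg]; simp)
  let e : PrimeT → (Fin 2 → ℤ) := fun p => gaussAddEquiv (gen p)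
  have hinj : Function.Injective e := by
    intro p q h
    have : gen p = gen q := gaussAddEquiv.injective h
    exact Subtype.ext (by rw [← hspan p, ← hspan q, this])
  have hN : ∀ p : PrimeT, ((idealNorm p.1 : ℝ)) =
      ((gen p).re : ℝ) ^ 2 + ((gen p).im : ℝ) ^ 2 := by
    intro p
    rw [← hspan p, idealNorm_span]
    have h := GaussianInt.norm_nonneg (gen p)
    rw [show ((((gen p).norm.natAbs : ℕ)) : ℝ) = (((gen p).norm : ℤ) : ℝ) by
      rw [Nat.cast_natAbs]; exact congrArg _ (abs_of_nonneg h)]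
    rw [Zsqrtd.norm_def]
    push_cast
    ring
  have hnormsq : ∀ p : PrimeT, ‖e p‖ ^ 2 ≤ ((idealNorm p.1 : ℝ)) := by
    intro p
    have hle : ‖e p‖ ≤ Real.sqrt ((idealNorm p.1 : ℝ)) := by
      rw [pi_norm_le_iff_of_nonneg (Real.sqrt_nonneg _)]
      intro i
      have hcase : (e p) i = (gen p).re ∨ (e p) i = (gen p).im := by
        fin_cases i
        · exact Or.inl rfl
        · exact Or.inr rfl
      have habs : ‖(e p) i‖ = |(((e p) i : ℤ) : ℝ)| := by
        rw [Int.norm_eq_abs]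
      rw [habs, ← Real.sqrt_sq_eq_abs]
      apply Real.sqrt_le_sqrt
      rw [hN p]
      rcases hcase with h | h <;> rw [h] <;>
        nlinarith [sq_nonneg (((gen p).re : ℝ)), sq_nonneg (((gen p).im : ℝ))]
    calc ‖e p‖ ^ 2 ≤ Real.sqrt ((idealNorm p.1 : ℝ)) ^ 2 := by
          apply pow_le_pow_left₀ (norm_nonneg _) hle
      _ = ((idealNorm p.1 : ℝ)) := Real.sq_sqrt (by positivity)
  have hpos : ∀ p : PrimeT, 0 < ‖e p‖ := by
    intro p
    rw [norm_pos_iff]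
    simp only [e, ne_eq, EmbeddingLike.map_eq_zero_iff]
    exact hgen0 p
  apply Summable.of_nonneg_of_le (f := fun p => ‖e p‖ ^ (-(2*(2*σ))))
    (fun p => Real.rpow_nonneg (by positivity) _)
  · intro p
    have h1 : ‖e p‖ ^ (-(2*(2*σ))) = (‖e p‖ ^ (2:ℕ)) ^ (-(2*σ)) := by
      rw [← Real.rpow_natCast ‖e p‖ 2, ← Real.rpow_mul (norm_nonneg _)]
      norm_num
    rw [h1]
    exact Real.rpow_le_rpow_of_nonpos (pow_pos (hpos p) 2) (by simpa using hnormsq p)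
      (by linarith)
  · exact hs.comp_injective hinj


lemma abs_exp_eq_one (y L : ℝ) : ‖Complex.exp (-2 * I * y * L)‖ = 1 := by
  rw [Complex.norm_exp]
  have : (-2 * I * (y:ℂ) * (L:ℂ)).re = 0 := by simp
  rw [this, Real.exp_zero]

set_option maxHeartbeats 2000000 in
lemma localFactor_bound (σ y : ℝ) (hσ : 1/2 < σ) (p : Ideal GaussianInt)
    (hN : 2 ≤ idealNorm p) :
    ‖localFactor σ y p - 1‖ ≤
      (4 * y^2 + 2 * |y|) * ((idealNorm p : ℝ)) ^ (-(2*σ)) := by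
  simp only [localFactor]
  set N : ℝ := ((idealNorm p : ℕ) : ℝ) with hNdef
  have hN2 : (2:ℝ) ≤ N := by rw [hNdef]; exact_mod_cast hN
  have hN0 : (0:ℝ) < N := by linarith
  set u : ℝ := N ^ σ with hudef
  have hu0 : 0 < u := Real.rpow_pos_of_pos hN0 σ
  have hu1 : (4/3 : ℝ) ≤ u := by
    have h1 : N ^ ((1:ℝ)/2) ≤ u := Real.rpow_le_rpow_of_exponent_le (by linarith) (by linarith)
    have h2 : (2:ℝ) ^ ((1:ℝ)/2) ≤ N ^ ((1:ℝ)/2) :=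
      Real.rpow_le_rpow (by norm_num) hN2 (by norm_num)
    have h3 : (4/3 : ℝ) ≤ (2:ℝ) ^ ((1:ℝ)/2) := by
      rw [← Real.sqrt_eq_rpow]
      rw [show (4/3 : ℝ) = Real.sqrt ((4/3)^2) by rw [Real.sqrt_sq (by norm_num)]]
      exact Real.sqrt_le_sqrt (by norm_num)
    linarith
  set t : ℝ := u⁻¹ with htdef
  have ht0 : 0 < t := inv_pos.mpr hu0
  have ht : t ≤ 3/4 := by
    rw [show (3/4 : ℝ) = (4/3)⁻¹ by norm_num]
    exact inv_anti₀ (by norm_num) hu1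
  have ht1 : t < 1 := lt_of_le_of_lt ht (by norm_num)
  -- the four absolute values
  have hcast : ((u:ℝ):ℂ)⁻¹ = ((t:ℝ):ℂ) := by rw [htdef]; push_cast; ring
  have hA0 : ‖1 - I ^ 0 / ((u:ℝ):ℂ)‖ = 1 - t := by
    rw [pow_zero, one_div, hcast, show (1:ℂ) - ((t:ℝ):ℂ) = (((1 - t : ℝ)):ℂ) by push_cast; ring,
      Complex.norm_real, Real.norm_eq_abs]
    exact abs_of_nonneg (by linarith)
  have hA2 : ‖1 - I ^ 2 / ((u:ℝ):ℂ)‖ = 1 + t := by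
    rw [Complex.I_sq]
    rw [show (1:ℂ) - -1 / ((u:ℝ):ℂ) = 1 + ((u:ℝ):ℂ)⁻¹ by ring, hcast,
      show (1:ℂ) + ((t:ℝ):ℂ) = (((1 + t : ℝ)):ℂ) by push_cast; ring, Complex.norm_real, Real.norm_eq_abs]
    exact abs_of_nonneg (by linarith)
  have hA1 : ‖1 - I ^ 1 / ((u:ℝ):ℂ)‖ = Real.sqrt (1 + t^2) := by
    rw [pow_one, show (1:ℂ) - I / ((u:ℝ):ℂ) = 1 - ((u:ℝ):ℂ)⁻¹ * I by ring, hcast]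
    rw [Complex.norm_def, Complex.normSq_apply]
    simp only [Complex.sub_re, Complex.one_re, Complex.mul_re, Complex.ofReal_re,
      Complex.I_re, Complex.ofReal_im, Complex.I_im, Complex.sub_im, Complex.one_im,
      Complex.mul_im]
    ring_nf
  have hA3 : ‖1 - I ^ 3 / ((u:ℝ):ℂ)‖ = Real.sqrt (1 + t^2) := by
    rw [pow_succ, Complex.I_sq, show (1:ℂ) - -1 * I / ((u:ℝ):ℂ) = 1 + ((u:ℝ):ℂ)⁻¹ * I by ring,
      hcast]
    rw [Complex.norm_def, Complex.normSq_apply]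
    simp only [Complex.add_re, Complex.one_re, Complex.mul_re, Complex.ofReal_re,
      Complex.I_re, Complex.ofReal_im, Complex.I_im, Complex.add_im, Complex.one_im,
      Complex.mul_im]
    ring_nf
  -- log bounds
  set L0 := Real.log (1 - t) with hL0
  set L1 := Real.log (Real.sqrt (1 + t^2)) with hL1
  set L2 := Real.log (1 + t) with hL2
  have h1t : (0:ℝ) < 1 - t := by linarith
  have hL0le : |L0| ≤ 4 * t := by
    have hneg : L0 ≤ 0 := Real.log_nonpos (by linarith) (by linarith)
    rw [abs_of_nonpos hneg, show -L0 = Real.log ((1-t)⁻¹) by rw [Real.log_inv]]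
    have hinv : (1-t)⁻¹ ≤ 1 + 4*t := by
      rw [← one_div, div_le_iff₀ h1t]; nlinarith
    refine (Real.log_le_sub_one_of_pos (by positivity)).trans ?_
    linarith
  have hL2nn : 0 ≤ L2 := Real.log_nonneg (by linarith)
  have hL2le : L2 ≤ t := (Real.log_le_sub_one_of_pos (by linarith)).trans (by linarith)
  have hsqrt_le : Real.sqrt (1 + t^2) ≤ 1 + t^2/2 := by
    rw [show (1:ℝ) + t^2/2 = Real.sqrt ((1 + t^2/2)^2) by rw [Real.sqrt_sq (by positivity)]]
    exact Real.sqrt_le_sqrt (by nlinarith)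
  have hsqrt_ge : (1:ℝ) ≤ Real.sqrt (1 + t^2) := by
    nlinarith [Real.sq_sqrt (show (0:ℝ) ≤ 1 + t^2 by positivity),
      Real.sqrt_nonneg (1 + t^2)]
  have hL1nn : 0 ≤ L1 := Real.log_nonneg hsqrt_ge
  have hL1le : L1 ≤ t^2/2 :=
    (Real.log_le_sub_one_of_pos (by positivity)).trans (by linarith)
  have hLsum : L0 + L2 = Real.log (1 - t^2) := by
    rw [hL0, hL2, ← Real.log_mul (by linarith) (by linarith)]
    congr 1; ring
  have hLsumle : |L0 + L2| ≤ 3 * t^2 := by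
    have h1t2 : (0:ℝ) < 1 - t^2 := by nlinarith
    have hneg : L0 + L2 ≤ 0 := by
      rw [hLsum]; exact Real.log_nonpos (by nlinarith) (by nlinarith)
    rw [abs_of_nonpos hneg, hLsum, show -Real.log (1-t^2) = Real.log ((1-t^2)⁻¹) by
      rw [Real.log_inv]]
    have hinv : (1-t^2)⁻¹ ≤ 1 + 3*t^2 := by
      rw [← one_div, div_le_iff₀ h1t2]
      nlinarith [mul_le_mul ht ht ht0.le (by norm_num : (0:ℝ) ≤ 3/4), sq_nonneg t]
    refine (Real.log_le_sub_one_of_pos (by positivity)).trans (by linarith)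
  -- exponential terms
  set E0 := Complex.exp (-2 * I * (y:ℂ) * ((L0:ℝ):ℂ)) with hE0
  set E1 := Complex.exp (-2 * I * (y:ℂ) * ((L1:ℝ):ℂ)) with hE1
  set E2 := Complex.exp (-2 * I * (y:ℂ) * ((L2:ℝ):ℂ)) with hE2
  have hsum : (∑ j ∈ Finset.range 4,
      Complex.exp (-2 * I * (y:ℂ) * ((Real.log ‖1 - I ^ j / ((u:ℝ):ℂ)‖ : ℝ):ℂ)))
      = E0 + E1 + E2 + E1 := by
    rw [Finset.sum_range_succ, Finset.sum_range_succ, Finset.sum_range_succ,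
      Finset.sum_range_one, hA0, hA1, hA2, hA3]
  have hb0 : ‖E0 - 1‖ ≤ 8 * |y| * t := by
    refine (abs_exp_term y L0).trans ?_
    have : 2 * |y| * |L0| ≤ 2 * |y| * (4 * t) :=
      mul_le_mul_of_nonneg_left hL0le (by positivity)
    linarith
  have hb2 : ‖E2 - 1‖ ≤ 2 * |y| * t := by
    refine (abs_exp_term y L2).trans ?_
    have h : |L2| ≤ t := by rw [_root_.abs_of_nonneg hL2nn]; exact hL2le
    have : 2 * |y| * |L2| ≤ 2 * |y| * t := mul_le_mul_of_nonneg_left h (by positivity)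
    linarith
  have hb1 : ‖E1 - 1‖ ≤ |y| * t^2 := by
    refine (abs_exp_term y L1).trans ?_
    have h : |L1| ≤ t^2/2 := by rw [_root_.abs_of_nonneg hL1nn]; exact hL1le
    have : 2 * |y| * |L1| ≤ 2 * |y| * (t^2/2) := mul_le_mul_of_nonneg_left h (by positivity)
    linarith
  have hmul : E0 * E2 = Complex.exp (-2 * I * (y:ℂ) * (((L0 + L2 :ℝ)):ℂ)) := by
    rw [hE0, hE2, ← Complex.exp_add]
    congr 1
    push_cast
    ring
  have hb02 : ‖E0 * E2 - 1‖ ≤ 6 * |y| * t^2 := by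
    rw [hmul]
    refine (abs_exp_term y (L0 + L2)).trans ?_
    have : 2 * |y| * |L0 + L2| ≤ 2 * |y| * (3 * t^2) :=
      mul_le_mul_of_nonneg_left hLsumle (by positivity)
    linarith
  have hkey : ‖E0 + E2 - 2‖ ≤ 6 * |y| * t^2 + 16 * y^2 * t^2 := by
    have hid : E0 + E2 - 2 = (E0 * E2 - 1) - (E0 - 1) * (E2 - 1) := by ring
    rw [hid]
    refine (norm_sub_le _ _).trans ?_
    have hprod : ‖(E0 - 1) * (E2 - 1)‖ ≤ 16 * y^2 * t^2 := by
      rw [norm_mul]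
      have := mul_le_mul hb0 hb2 (norm_nonneg _) (by positivity)
      calc ‖E0-1‖ * ‖E2-1‖ ≤ (8 * |y| * t) * (2 * |y| * t) := this
        _ = 16 * y^2 * t^2 := by
              rw [show (8 * |y| * t) * (2 * |y| * t) = 16 * (|y| * |y|) * (t * t) by ring,
                abs_mul_abs_self]; ring
    linarith [hb02]
  have hS : ‖(E0 + E1 + E2 + E1) - 4‖ ≤ (16 * y^2 + 8 * |y|) * t^2 := by
    have hid : (E0 + E1 + E2 + E1) - 4 = (E0 + E2 - 2) + ((E1 - 1) + (E1 - 1)) := by ring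
    rw [hid]
    refine (norm_add_le _ _).trans ?_
    refine (add_le_add hkey ((norm_add_le _ _).trans (add_le_add hb1 hb1))).trans ?_
    nlinarith [sq_nonneg t, abs_nonneg y]
  -- put it together
  rw [hsum]
  have hNe : ((N:ℝ):ℂ) + 1 ≠ 0 := by
    rw [show ((N:ℝ):ℂ) + 1 = (((N + 1:ℝ)):ℂ) by push_cast; ring]
    exact_mod_cast (by positivity : (N + 1:ℝ) ≠ 0)
  have hfactor : ((1 / (N+1) : ℝ) : ℂ) + (1/4) * ((N / (N+1) : ℝ) : ℂ) * (E0 + E1 + E2 + E1) - 1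
      = ((N / (N+1) : ℝ) : ℂ) * (1/4) * ((E0 + E1 + E2 + E1) - 4) := by
    push_cast
    field_simp
    ring
  rw [hfactor, norm_mul, norm_mul]
  have hcoef : ‖((N / (N+1) : ℝ) : ℂ)‖ ≤ 1 := by
    rw [Complex.norm_real, Real.norm_eq_abs, _root_.abs_of_nonneg (by positivity)]
    rw [div_le_one (by positivity)]
    linarith
  have hquarter : ‖(1/4 : ℂ)‖ = 1/4 := by norm_num
  have ht2 : t^2 = N ^ (-(2*σ)) := by
    rw [show -(2*σ) = σ * (-2 : ℤ) by push_cast; ring, Real.rpow_mul hN0.le, ← hudef,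
      Real.rpow_intCast]
    rw [htdef, inv_pow, zpow_neg, ← zpow_natCast u 2]
    norm_num
  calc ‖((N / (N+1) : ℝ) : ℂ)‖ * ‖(1/4 : ℂ)‖ *
        ‖(E0 + E1 + E2 + E1) - 4‖
      ≤ 1 * (1/4) * ((16 * y^2 + 8 * |y|) * t^2) := by
        rw [hquarter]
        refine mul_le_mul (mul_le_mul_of_nonneg_right hcoef (by norm_num)) hS
          (norm_nonneg _) (by positivity)
    _ = (4 * y^2 + 2 * |y|) * t^2 := by ring
    _ = (4 * y^2 + 2 * |y|) * N ^ (-(2*σ)) := by rw [ht2]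


set_option maxHeartbeats 2000000 in
lemma summable_abs_sub_one (σ y : ℝ) (hσ : 1 / 2 < σ) :
    Summable (fun p : PrimeT => ‖localFactor σ y p.1 - 1‖) := by
  apply Summable.of_nonneg_of_le (fun p => norm_nonneg _)
    (f := fun p : PrimeT => (4 * y^2 + 2 * |y|) * ((idealNorm p.1 : ℝ)) ^ (-(2*σ)))
  · intro p
    exact localFactor_bound σ y hσ p.1 (two_le_idealNorm p.2.1 p.2.2.1)
  · exact (summable_idealNorm_rpow σ hσ).mul_left _

set_option maxHeartbeats 2000000 in
lemma multipliable_localFactor (σ y : ℝ) (hσ : 1 / 2 < σ) :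
    Multipliable (fun p : PrimeT => localFactor σ y p.1) := by
  have hsum := summable_abs_sub_one σ y hσ
  by_cases hz : ∃ p0 : PrimeT, localFactor σ y p0.1 = 0
  · obtain ⟨p0, hp0⟩ := hz
    refine ⟨0, ?_⟩
    rw [HasProd]
    apply Filter.Tendsto.congr' _ tendsto_const_nhds
    filter_upwards [Filter.eventually_ge_atTop ({p0} : Finset PrimeT)] with s hs
    exact (Finset.prod_eq_zero (hs (Finset.mem_singleton_self p0)) hp0).symm
  · push_neg at hz
    have key : Summable (fun p : PrimeT => Complex.log (localFactor σ y p.1)) := by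
      have hc : Filter.Tendsto (fun p : PrimeT => ‖localFactor σ y p.1 - 1‖)
          Filter.cofinite (nhds 0) := hsum.tendsto_cofinite_zero
      have hev : ∀ᶠ p : PrimeT in Filter.cofinite,
          ‖localFactor σ y p.1 - 1‖ < 1/2 :=
        hc.eventually_lt_const (by norm_num)
      apply Summable.of_norm_bounded_eventually
        (g := fun p : PrimeT => (3/2) * ‖localFactor σ y p.1 - 1‖)
        (hsum.mul_left _)
      filter_upwards [hev] with p hp
      have h := Complex.norm_log_one_add_half_le_self
        (z := localFactor σ y p.1 - 1) (by linarith)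
      rwa [show (1 : ℂ) + (localFactor σ y p.1 - 1) = localFactor σ y p.1 by ring] at h
    exact ⟨_, HasProd.congr_fun key.hasSum.cexp (fun p => (Complex.exp_log (hz p)).symm)⟩

end Stmt15Aux

theorem stmt15 (σ y : ℝ) (hσ : 1 / 2 < σ) :
    Summable (fun p : {p : Ideal GaussianInt // p.IsPrime ∧ p ≠ ⊥ ∧ (2 : GaussianInt) ∉ p} =>
        ‖localFactor σ y p.1 - 1‖) ∧
    Multipliable (fun p : {p : Ideal GaussianInt // p.IsPrime ∧ p ≠ ⊥ ∧ (2 : GaussianInt) ∉ p} =>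
        localFactor σ y p.1) :=
  ⟨Stmt15Aux.summable_abs_sub_one σ y hσ, Stmt15Aux.multipliable_localFactor σ y hσ⟩
end
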